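/- For real numbers ω_1, …, ω_n such that all partial sums Σ_{j=1}^k ω_j (1 ≤ k ≤ n) are nonzero, the iterated integral ∫_0^β dβ_1 ∫_0^{β_1} dβ_2 ⋯ ∫_0^{β_{n-1}} dβ_n exp(−Σ_{j=1}^n β_j ω_j) equals 1/∏_{k=1}^n (Σ_{j=1}^k ω_j) + Σ_{p=1}^n (−1)^p exp(−β Σ_{i=1}^p ω_i) / [ (∏_{m=1}^p Σ_{i=m}^p ω_i) (∏_{k=p+1}^n Σ_{j=p+1}^k ω_j) ], assuming also all sums Σ_{i=m}^p ω_i appearing in the denominators are nonzero. -/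

import Mathlib

open Finset

/-- The iterated simplex integral
`h_n(β; ω_0, …, ω_{n-1}) = ∫_0^β dβ_1 ⋯ ∫_0^{β_{n-1}} dβ_n exp(-∑ β_j ω_{j-1})`,
defined recursively on the number of integrations. -/
noncomputable def iterSimplexInt (ω : ℕ → ℝ) : ℕ → ℝ → ℝ
  | 0, _ => 1
  | n + 1, β =>
      ∫ t in (0:ℝ)..β, Real.exp (-(ω 0 * t)) * iterSimplexInt (fun k => ω (k + 1)) n t


/-- `cf x n p = ∏_{m<p} (x p - x m) * ∏_{p<q≤n} (x q - x p)`. -/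
noncomputable def cfAux (x : ℕ → ℝ) (n p : ℕ) : ℝ :=
  (∏ m ∈ Finset.range p, (x p - x m)) * ∏ q ∈ Finset.Icc (p+1) n, (x q - x p)

lemma lagrange_sum_inv (n : ℕ) (hn : 1 ≤ n) (x : ℕ → ℝ)
    (hx : Set.InjOn x (Finset.range (n+1))) :
    ∑ p ∈ Finset.range (n+1),
      (∏ m ∈ (Finset.range (n+1)).erase p, (x p - x m))⁻¹ = 0 := by
  have h1 := Lagrange.sum_basis hx ⟨0, by simp⟩
  have h2 := congrArg (fun q => Polynomial.coeff q n) h1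
  simp only [Polynomial.finset_sum_coeff] at h2
  rw [Polynomial.coeff_one] at h2
  have hne : (n : ℕ) ≠ 0 := by omega
  rw [if_neg (by omega)] at h2
  rw [← h2]
  refine Finset.sum_congr rfl fun p hp => ?_
  have hdeg : (Lagrange.basis (Finset.range (n+1)) x p).natDegree = n := by
    rw [Lagrange.natDegree_basis hx hp]; simp
  have hlc := Polynomial.coeff_natDegree (p := Lagrange.basis (Finset.range (n+1)) x p)
  rw [hdeg] at hlc
  rw [hlc]
  unfold Lagrange.basis
  rw [Polynomial.leadingCoeff_prod]
  rw [← Finset.prod_inv_distrib]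
  refine Finset.prod_congr rfl fun m hm => ?_
  have hne2 : x p ≠ x m := by
    rw [Finset.mem_erase] at hm
    intro h
    exact hm.1.symm (hx (by simpa using hm.2) (by simpa using hp) h.symm).symm
  rw [Lagrange.basisDivisor, Polynomial.leadingCoeff_mul]
  simp [Polynomial.leadingCoeff_X_sub_C]

lemma id_cf (n : ℕ) (hn : 1 ≤ n) (x : ℕ → ℝ)
    (hx : ∀ a b : ℕ, a < b → b ≤ n → x b - x a ≠ 0) :
    ∑ p ∈ Finset.range (n+1), (-1:ℝ)^p / cfAux x n p = 0 := by
  have hinj : Set.InjOn x (Finset.range (n+1)) := by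
    intro a ha b hb hab
    simp only [Finset.coe_range, Set.mem_Iio] at ha hb
    by_contra hne
    rcases Nat.lt_or_ge a b with h | h
    · exact hx a b h (by omega) (by rw [hab]; ring)
    · exact hx b a (by omega) (by omega) (by rw [hab]; ring)
  have key := lagrange_sum_inv n hn x hinj
  have hterm : ∀ p ∈ Finset.range (n+1),
      (-1:ℝ)^p / cfAux x n p
        = (-1:ℝ)^n * (∏ m ∈ (Finset.range (n+1)).erase p, (x p - x m))⁻¹ := by
    intro p hp
    simp only [Finset.mem_range] at hp
    have hsplit : (Finset.range (n+1)).erase p = Finset.range p ∪ Finset.Icc (p+1) n := by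
      ext m
      simp only [Finset.mem_erase, Finset.mem_range, Finset.mem_union, Finset.mem_Icc]
      omega
    have hdisj : Disjoint (Finset.range p) (Finset.Icc (p+1) n) := by
      rw [Finset.disjoint_left]
      intro m hm hm2
      simp only [Finset.mem_range] at hm
      simp only [Finset.mem_Icc] at hm2
      omega
    have h2 : ∏ q ∈ Finset.Icc (p+1) n, (x p - x q)
        = (-1:ℝ)^(n - p) * ∏ q ∈ Finset.Icc (p+1) n, (x q - x p) := by
      calc ∏ q ∈ Finset.Icc (p+1) n, (x p - x q)
          = ∏ q ∈ Finset.Icc (p+1) n, (-1) * (x q - x p) :=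
            Finset.prod_congr rfl fun q _ => by ring
        _ = (-1:ℝ)^(n-p) * ∏ q ∈ Finset.Icc (p+1) n, (x q - x p) := by
            rw [Finset.prod_mul_distrib, Finset.prod_const, Nat.card_Icc]
            congr 2
            omega
    have hpow : (-1:ℝ)^n * (-1:ℝ)^p = (-1:ℝ)^(n-p) := by
      rw [← pow_add, show n + p = (n - p) + 2*p by omega, pow_add, pow_mul]
      norm_num
    have hA : ∏ m ∈ Finset.range p, (x p - x m) ≠ 0 :=
      Finset.prod_ne_zero_iff.mpr fun m hm => hx m p (Finset.mem_range.mp hm) (by omega)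
    have hB : ∏ q ∈ Finset.Icc (p+1) n, (x q - x p) ≠ 0 :=
      Finset.prod_ne_zero_iff.mpr fun q hq => by
        simp only [Finset.mem_Icc] at hq
        exact hx p q (by omega) hq.2
    rw [hsplit, Finset.prod_union hdisj, h2]
    unfold cfAux
    rw [mul_inv, mul_inv, div_eq_mul_inv, mul_inv, ← mul_assoc, ← mul_assoc]
    have hinv : ((-1:ℝ)^(n-p))⁻¹ = (-1:ℝ)^(n-p) := by
      rw [← inv_pow]
      norm_num
    rw [hinv, ← hpow]
    ring_nf
    rw [pow_mul, show ((-1:ℝ)^n)^2 = 1 from by rw [← pow_mul, mul_comm, pow_mul]; norm_num, mul_one]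
  rw [Finset.sum_congr rfl hterm, ← Finset.mul_sum, key, mul_zero]

lemma exp_int (q β : ℝ) (hq : q ≠ 0) :
    ∫ t in (0:ℝ)..β, Real.exp (-(t*q)) = (1 - Real.exp (-(β*q)))/q := by
  have key : ∀ t ∈ Set.uIcc (0:ℝ) β,
      HasDerivAt (fun u => -(Real.exp (-(u*q)))/q) (Real.exp (-(t*q))) t := by
    intro t _
    have h1 : HasDerivAt (fun u : ℝ => -(u*q)) (-q) t := by
      simpa using ((hasDerivAt_id t).mul_const q).fun_neg
    have h3 := (h1.exp.fun_neg).div_const q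
    refine h3.congr_deriv ?_
    field_simp
  rw [intervalIntegral.integral_eq_sub_of_hasDerivAt key
    (Continuous.intervalIntegrable (by continuity) _ _)]
  simp [Real.exp_zero]
  ring

lemma integral_step (n : ℕ) (a β : ℝ) (ha : a ≠ 0) (c y : ℕ → ℝ)
    (hq : ∀ p ∈ Finset.Icc 1 n, a + y p ≠ 0) :
    (∫ t in (0:ℝ)..β,
      Real.exp (-(a*t)) * ∑ p ∈ Finset.Icc 1 n, c p * (Real.exp (-(t * y p)) - 1))
    = ∑ p ∈ Finset.Icc 1 n,
        c p * ((1 - Real.exp (-(β*(a + y p))))/(a + y p) - (1 - Real.exp (-(β*a)))/a) := by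
  have hcong : ∀ t : ℝ,
      Real.exp (-(a*t)) * ∑ p ∈ Finset.Icc 1 n, c p * (Real.exp (-(t * y p)) - 1)
      = ∑ p ∈ Finset.Icc 1 n,
          (c p * Real.exp (-(t*(a + y p))) - c p * Real.exp (-(t*a))) := by
    intro t
    rw [Finset.mul_sum]
    refine Finset.sum_congr rfl fun p _ => ?_
    have h : Real.exp (-(t*(a+y p))) = Real.exp (-(a*t)) * Real.exp (-(t*y p)) := by
      rw [← Real.exp_add]
      ring_nf
    rw [h]
    ring
  rw [intervalIntegral.integral_congr (g := fun t => ∑ p ∈ Finset.Icc 1 n,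
      (c p * Real.exp (-(t*(a + y p))) - c p * Real.exp (-(t*a)))) (fun t _ => hcong t)]
  rw [intervalIntegral.integral_finset_sum
      (fun p _ => (Continuous.intervalIntegrable (by continuity) _ _))]
  refine Finset.sum_congr rfl fun p hp => ?_
  rw [intervalIntegral.integral_sub
      (Continuous.intervalIntegrable (by continuity) _ _)
      (Continuous.intervalIntegrable (by continuity) _ _),
    intervalIntegral.integral_const_mul, intervalIntegral.integral_const_mul,
    exp_int _ _ (hq p hp), exp_int _ _ ha]
  ring

def PS (ω : ℕ → ℝ) (p : ℕ) : ℝ := ∑ i ∈ Finset.range p, ω i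

lemma sum_Icc_PS (ω : ℕ → ℝ) (a b : ℕ) (hab : a ≤ b + 1) :
    ∑ i ∈ Finset.Icc a b, ω i = PS ω (b+1) - PS ω a := by
  rw [← Finset.Ico_add_one_right_eq_Icc, Finset.sum_Ico_eq_sub _ hab]
  rfl

lemma PS_shift (ω : ℕ → ℝ) (p : ℕ) :
    PS (fun k => ω (k+1)) p = PS ω (p+1) - ω 0 := by
  unfold PS
  rw [Finset.sum_range_succ']
  ring

lemma main_lemma (n : ℕ) (hn : 1 ≤ n) : ∀ (ω : ℕ → ℝ) (β : ℝ),
    (∀ a b : ℕ, a ≤ b → b < n → ∑ i ∈ Finset.Icc a b, ω i ≠ 0) →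
    iterSimplexInt ω n β
      = ∑ p ∈ Finset.Icc 1 n,
          ((-1:ℝ)^p / cfAux (PS ω) n p) * (Real.exp (-(β * PS ω p)) - 1) := by
  induction n, hn using Nat.le_induction with
  | base =>
    intro ω β hsums
    have hω0 : ω 0 ≠ 0 := by simpa using hsums 0 0 le_rfl (by omega)
    show (∫ t in (0:ℝ)..β, Real.exp (-(ω 0 * t)) * iterSimplexInt (fun k => ω (k+1)) 0 t) = _
    have hEq : ∀ t ∈ Set.uIcc (0:ℝ) β,
        (fun t => Real.exp (-(ω 0 * t)) * iterSimplexInt (fun k => ω (k+1)) 0 t) t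
          = (fun t => Real.exp (-(t * ω 0))) t := by
      intro t _
      show Real.exp (-(ω 0 * t)) * 1 = _
      rw [mul_one, mul_comm]
    rw [intervalIntegral.integral_congr hEq, exp_int _ _ hω0]
    have h1 : Finset.Icc 1 1 = {1} := Finset.Icc_self 1
    rw [h1, Finset.sum_singleton]
    have h2 : cfAux (PS ω) 1 1 = ω 0 := by
      unfold cfAux
      simp [PS]
    have h3 : PS ω 1 = ω 0 := by simp [PS]
    rw [h2, h3]
    field_simp
    ring
  | succ n hn ih =>
    intro ω β hsums
    set ω' : ℕ → ℝ := fun k => ω (k+1) with hω'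
    set y : ℕ → ℝ := PS ω' with hy
    set X : ℕ → ℝ := PS ω with hXdef
    have hsums' : ∀ a b : ℕ, a ≤ b → b < n → ∑ i ∈ Finset.Icc a b, ω' i ≠ 0 := by
      intro a b hab hbn
      have h : ∑ i ∈ Finset.Icc a b, ω' i = ∑ i ∈ Finset.Icc (a+1) (b+1), ω i := by
        rw [← Finset.map_add_right_Icc a b 1, Finset.sum_map]
        rfl
      rw [h]
      exact hsums (a+1) (b+1) (by omega) (by omega)
    have hω0 : ω 0 ≠ 0 := by simpa using hsums 0 0 le_rfl (by omega)
    have hyX : ∀ p, ω 0 + y p = X (p+1) := by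
      intro p
      rw [hy, hω', PS_shift]
      ring
    have hy0 : y 0 = 0 := by simp [hy, PS]
    have hX0 : X 0 = 0 := by simp [hXdef, PS]
    have hydiff : ∀ a b : ℕ, y b - y a = X (b+1) - X (a+1) := by
      intro a b
      rw [hy, hω', PS_shift, PS_shift]
      ring
    show (∫ t in (0:ℝ)..β, Real.exp (-(ω 0 * t)) * iterSimplexInt ω' n t) = _
    have hEq : ∀ t ∈ Set.uIcc (0:ℝ) β,
        (fun t => Real.exp (-(ω 0 * t)) * iterSimplexInt ω' n t) t
          = (fun t => Real.exp (-(ω 0 * t)) * ∑ p ∈ Finset.Icc 1 n,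
              ((-1:ℝ)^p / cfAux y n p) * (Real.exp (-(t * y p)) - 1)) t := by
      intro t _
      simp only
      rw [ih ω' t hsums']
    rw [intervalIntegral.integral_congr hEq]
    have hq : ∀ p ∈ Finset.Icc 1 n, ω 0 + y p ≠ 0 := by
      intro p hp
      simp only [Finset.mem_Icc] at hp
      rw [hyX]
      have h := hsums 0 p (by omega) (by omega)
      rwa [sum_Icc_PS ω 0 p (by omega), show PS ω 0 = 0 from by simp [PS], sub_zero] at h
    rw [integral_step n (ω 0) β hω0 _ y hq]
    -- algebraic identities
    have hcf_shift : ∀ p : ℕ, cfAux X (n+1) (p+1) = X (p+1) * cfAux y n p := by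
      intro p
      unfold cfAux
      rw [Finset.prod_range_succ']
      have h1 : ∀ m ∈ Finset.range p, X (p+1) - X (m+1) = y p - y m :=
        fun m _ => (hydiff m p).symm
      rw [Finset.prod_congr rfl h1, hX0, sub_zero]
      have h2 : ∏ q ∈ Finset.Icc (p+1+1) (n+1), (X q - X (p+1))
          = ∏ q ∈ Finset.Icc (p+1) n, (y q - y p) := by
        rw [← Finset.map_add_right_Icc (p+1) n 1, Finset.prod_map]
        refine Finset.prod_congr rfl fun q _ => ?_
        simp only [addRightEmbedding_apply]
        rw [← hydiff]
      rw [h2]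
      ring
    have hprod_y : cfAux y n 0 = ∏ q ∈ Finset.Icc 1 n, y q := by
      unfold cfAux
      simp only [Finset.range_zero, Finset.prod_empty, one_mul, hy0, sub_zero, zero_add]
    have hcf1 : cfAux X (n+1) 1 = X 1 * ∏ q ∈ Finset.Icc 1 n, y q := by
      unfold cfAux
      rw [Finset.prod_range_one, hX0, sub_zero]
      congr 1
      rw [← Finset.map_add_right_Icc 1 n 1, Finset.prod_map]
      refine Finset.prod_congr rfl fun q _ => ?_
      simp only [addRightEmbedding_apply]
      have := hydiff 0 q
      rw [hy0, sub_zero] at this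
      rw [← this]
    have hy_ne : ∀ a b : ℕ, a < b → b ≤ n → y b - y a ≠ 0 := by
      intro a b h1 h2
      rw [hydiff, hXdef, ← sum_Icc_PS ω (a+1) b (by omega)]
      exact hsums (a+1) b (by omega) (by omega)
    have hid := id_cf n hn y hy_ne
    have hsum_c : ∑ p ∈ Finset.Icc 1 n, (-1:ℝ)^p / cfAux y n p = -(1 / cfAux y n 0) := by
      have hins : Finset.range (n+1) = insert 0 (Finset.Icc 1 n) := by
        ext m
        simp only [Finset.mem_range, Finset.mem_insert, Finset.mem_Icc]
        omega
      rw [hins, Finset.sum_insert (by simp)] at hid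
      simp only [pow_zero] at hid
      linarith
    -- split RHS
    have hsplit : Finset.Icc 1 (n+1) = insert 1 (Finset.Icc 2 (n+1)) := by
      ext m
      simp only [Finset.mem_Icc, Finset.mem_insert]
      omega
    rw [hsplit, Finset.sum_insert (by simp), show Finset.Icc 2 (n+1)
        = (Finset.Icc 1 n).map (addRightEmbedding 1) from by rw [Finset.map_add_right_Icc],
      Finset.sum_map]
    simp only [addRightEmbedding_apply]
    -- LHS split
    have hL : ∀ p ∈ Finset.Icc 1 n,
        ((-1:ℝ)^p / cfAux y n p) *
          ((1 - Real.exp (-(β*(ω 0 + y p))))/(ω 0 + y p)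
            - (1 - Real.exp (-(β*(ω 0))))/(ω 0))
        = ((-1:ℝ)^p / cfAux y n p) * (1 - Real.exp (-(β * X (p+1))))/(X (p+1))
          - ((-1:ℝ)^p / cfAux y n p) * ((1 - Real.exp (-(β*(ω 0))))/(ω 0)) := by
      intro p _
      rw [hyX]
      ring
    rw [Finset.sum_congr rfl hL, Finset.sum_sub_distrib, ← Finset.sum_mul, hsum_c, hprod_y]
    have hterm : ∀ p ∈ Finset.Icc 1 n,
        ((-1:ℝ)^p / cfAux y n p) * (1 - Real.exp (-(β * X (p+1))))/(X (p+1))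
        = ((-1:ℝ)^(p+1) / cfAux X (n+1) (p+1)) * (Real.exp (-(β * X (p+1))) - 1) := by
      intro p _
      rw [hcf_shift p, pow_succ]
      ring
    rw [Finset.sum_congr rfl hterm, hcf1]
    have hω0X : ω 0 = X 1 := by simp [hXdef, PS]
    rw [hω0X]
    ring

theorem iterated_simplex_integral_formula
    (n : ℕ) (ω : ℕ → ℝ) (β : ℝ) (hβ : 0 < β)
    (hsums : ∀ a b : ℕ, a ≤ b → b < n → ∑ i ∈ Finset.Icc a b, ω i ≠ 0) :
    iterSimplexInt ω n β =
      1 / ∏ k ∈ Finset.range n, ∑ j ∈ Finset.range (k + 1), ω j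
      + ∑ p ∈ Finset.Icc 1 n,
          (-1 : ℝ) ^ p * Real.exp (-(β * ∑ i ∈ Finset.range p, ω i)) /
            ((∏ m ∈ Finset.range p, ∑ i ∈ Finset.Icc m (p - 1), ω i) *
              (∏ k ∈ Finset.Icc p (n - 1), ∑ j ∈ Finset.Icc p k, ω j)) := by
  rcases Nat.eq_zero_or_pos n with hn0 | hn
  · subst hn0
    simp [iterSimplexInt, Finset.Icc_eq_empty_of_lt]
  · rw [main_lemma n hn ω β hsums]
    have hX0 : PS ω 0 = 0 := by simp [PS]
    have hX_ne : ∀ a b : ℕ, a < b → b ≤ n → PS ω b - PS ω a ≠ 0 := by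
      intro a b h1 h2
      have h := hsums a (b-1) (by omega) (by omega)
      rw [sum_Icc_PS ω a (b-1) (by omega), show b-1+1 = b from by omega] at h
      exact h
    have hid := id_cf n hn (PS ω) hX_ne
    have hsum_c : ∑ p ∈ Finset.Icc 1 n, (-1:ℝ)^p / cfAux (PS ω) n p
        = -(1 / cfAux (PS ω) n 0) := by
      have hins : Finset.range (n+1) = insert 0 (Finset.Icc 1 n) := by
        ext m
        simp only [Finset.mem_range, Finset.mem_insert, Finset.mem_Icc]
        omega
      rw [hins, Finset.sum_insert (by simp)] at hid
      simp only [pow_zero] at hid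
      linarith
    have hprod0 : cfAux (PS ω) n 0 = ∏ q ∈ Finset.Icc 1 n, PS ω q := by
      unfold cfAux
      simp only [Finset.range_zero, Finset.prod_empty, one_mul, hX0, sub_zero, zero_add]
    have hconst : ∏ k ∈ Finset.range n, ∑ j ∈ Finset.range (k+1), ω j
        = ∏ q ∈ Finset.Icc 1 n, PS ω q := by
      have h2 : (Finset.range n).map (addRightEmbedding 1) = Finset.Icc 1 n := by
        rw [Finset.range_eq_Ico, Finset.map_add_right_Ico]
        simp [Finset.Ico_add_one_right_eq_Icc]
      rw [← h2, Finset.prod_map]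
      simp only [addRightEmbedding_apply]
      rfl
    have hdenom : ∀ p ∈ Finset.Icc 1 n,
        (∏ m ∈ Finset.range p, ∑ i ∈ Finset.Icc m (p-1), ω i) *
          (∏ k ∈ Finset.Icc p (n-1), ∑ j ∈ Finset.Icc p k, ω j) = cfAux (PS ω) n p := by
      intro p hp
      simp only [Finset.mem_Icc] at hp
      unfold cfAux
      congr 1
      · refine Finset.prod_congr rfl fun m hm => ?_
        simp only [Finset.mem_range] at hm
        rw [sum_Icc_PS ω m (p-1) (by omega), show p-1+1 = p from by omega]
      · have h2 : (Finset.Icc p (n-1)).map (addRightEmbedding 1) = Finset.Icc (p+1) n := by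
          rw [Finset.map_add_right_Icc, show n-1+1 = n from by omega]
        rw [← h2, Finset.prod_map]
        simp only [addRightEmbedding_apply]
        refine Finset.prod_congr rfl fun k hk => ?_
        simp only [Finset.mem_Icc] at hk
        rw [sum_Icc_PS ω p k (by omega)]
    have hLHS : ∀ p ∈ Finset.Icc 1 n,
        ((-1:ℝ)^p / cfAux (PS ω) n p) * (Real.exp (-(β * PS ω p)) - 1)
        = (-1:ℝ)^p * Real.exp (-(β * PS ω p)) / cfAux (PS ω) n p
            - (-1:ℝ)^p / cfAux (PS ω) n p := by
      intro p _
      ring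
    have hmatch : ∀ p ∈ Finset.Icc 1 n,
        (-1:ℝ)^p * Real.exp (-(β * PS ω p)) / cfAux (PS ω) n p
        = (-1 : ℝ) ^ p * Real.exp (-(β * ∑ i ∈ Finset.range p, ω i)) /
            ((∏ m ∈ Finset.range p, ∑ i ∈ Finset.Icc m (p - 1), ω i) *
              (∏ k ∈ Finset.Icc p (n - 1), ∑ j ∈ Finset.Icc p k, ω j)) := by
      intro p hp
      rw [hdenom p hp]
      rfl
    rw [Finset.sum_congr rfl hLHS, Finset.sum_sub_distrib, hsum_c, hprod0, hconst,
      Finset.sum_congr rfl hmatch]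
    ring
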